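/- Let P = {u ∈ R^n : Au ≤ b} be a nonempty polyhedron with A ∈ R^{m×n}, b ∈ R^m, and for ε ≥ 0 define the ε-erosion P^ε = {u ∈ P : u ± ε e_j ∈ P for all j} = {u : Au ≤ b − εa}, where a_i = min_j |A_{ij}|. Then there is a constant C_P ≥ 0 depending only on A such that for all ε with P^ε nonempty, the Hausdorff distance in the sup-norm satisfies d_∞(P, P^ε) ≤ C_P ε. -/

import Mathlib

open RealInnerProductSpace

noncomputable def combo {ι : Type*} [Fintype ι] {E : Type*} [AddCommGroup E] [Module ℝ E]
    (r : ι → E) : (ι → ℝ) →ₗ[ℝ] E where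
  toFun μ := ∑ i, μ i • r i
  map_add' x y := by simp [add_smul, Finset.sum_add_distrib]
  map_smul' c x := by simp [smul_smul, Finset.smul_sum]

@[simp] lemma combo_apply {ι : Type*} [Fintype ι] {E : Type*} [AddCommGroup E] [Module ℝ E]
    (r : ι → E) (μ : ι → ℝ) : combo r μ = ∑ i, μ i • r i := rfl

section KS
open scoped Classical
variable {E : Type*} [NormedAddCommGroup E] [InnerProductSpace ℝ E]

lemma combo_ker {ι : Type*} [Fintype ι] (r : ι → E) (h : LinearIndependent ℝ r) :
    LinearMap.ker (combo r) = ⊥ := by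
  rw [LinearMap.ker_eq_bot']
  intro μ hμ
  exact funext fun i => Fintype.linearIndependent_iff.mp h μ (by simpa using hμ) i

noncomputable def KS {m : ℕ} (r : Fin m → E) (S : Finset (Fin m)) : NNReal :=
  if h : LinearIndependent ℝ (fun i : S => r i) then
    (LinearMap.exists_antilipschitzWith (combo (fun i : S => r i))
      (combo_ker _ h)).choose
  else 0

lemma KS_spec {m : ℕ} (r : Fin m → E) (S : Finset (Fin m))
    (h : LinearIndependent ℝ (fun i : S => r i)) :
    AntilipschitzWith (KS r S) (combo (fun i : S => r i)) := by
  rw [KS, dif_pos h]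
  exact (LinearMap.exists_antilipschitzWith (combo (fun i : S => r i))
      (combo_ker _ h)).choose_spec.2

lemma coneS_closed {m : ℕ} (r : Fin m → E) (S : Finset (Fin m))
    (h : LinearIndependent ℝ (fun i : S => r i)) :
    IsClosed ((combo (fun i : S => r i)) '' (Set.Ici 0)) := by
  have hK := KS_spec r S h
  have huc : UniformContinuous (combo (fun i : S => r i)) := by
    have := (LinearMap.toContinuousLinearMap (combo (fun i : S => r i))).uniformContinuous
    simpa using this
  exact (hK.isClosedEmbedding huc).isClosedMap _ isClosed_Ici

end KS
theorem carath {E : Type*} [AddCommGroup E] [Module ℝ E] {m : ℕ} (r : Fin m → E)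
    (lam : Fin m → ℝ) (hlam : ∀ i, 0 ≤ lam i) :
    ∃ (S : Finset (Fin m)) (mu : Fin m → ℝ), (∀ i, 0 ≤ mu i) ∧ (∀ i ∉ S, mu i = 0) ∧
      (∀ i ∈ S, lam i ≠ 0) ∧ LinearIndependent ℝ (fun i : S => r i) ∧
      ∑ i, mu i • r i = ∑ i, lam i • r i := by
  classical
  suffices H : ∀ (N : ℕ) (lam : Fin m → ℝ), (∀ i, 0 ≤ lam i) →
      (Finset.univ.filter fun i => lam i ≠ 0).card ≤ N →
      ∃ (S : Finset (Fin m)) (mu : Fin m → ℝ), (∀ i, 0 ≤ mu i) ∧ (∀ i ∉ S, mu i = 0) ∧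
        (∀ i ∈ S, lam i ≠ 0) ∧ LinearIndependent ℝ (fun i : S => r i) ∧
        ∑ i, mu i • r i = ∑ i, lam i • r i by
    exact H _ lam hlam le_rfl
  intro N
  induction N with
  | zero =>
    intro lam hlam hcard
    have hS : (Finset.univ.filter fun i => lam i ≠ 0) = ∅ := Finset.card_eq_zero.mp
      (Nat.le_zero.mp hcard)
    have hlam0 : ∀ i, lam i = 0 := by
      intro i
      by_contra h
      have : i ∈ (Finset.univ.filter fun i => lam i ≠ 0) := by simp [h]
      simp [hS] at this
    refine ⟨∅, lam, hlam, fun i _ => hlam0 i, by simp, ?_, rfl⟩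
    have : IsEmpty ((∅ : Finset (Fin m)) : Type) := by simp; exact ⟨fun x => x.2⟩
    exact linearIndependent_empty_type
  | succ N ih =>
    intro lam hlam hcard
    set T := Finset.univ.filter fun i => lam i ≠ 0 with hT
    by_cases hind : LinearIndependent ℝ (fun i : T => r i)
    · exact ⟨T, lam, hlam, fun i hi => by simpa [hT] using hi, fun i hi => by
        simpa [hT] using hi, hind, rfl⟩
    · obtain ⟨g, hgsum, i₀, hgi₀⟩ := Fintype.not_linearIndependent_iff.mp hind
      set s : ℝ := if 0 < g i₀ then 1 else -1 with hs
      set g' : T → ℝ := fun i => s * g i with hg'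
      have hg'i₀ : 0 < g' i₀ := by
        rcases lt_trichotomy (g i₀) 0 with h | h | h
        · simp only [hg', hs, if_neg (not_lt.mpr h.le)]; nlinarith
        · exact absurd h hgi₀
        · simp only [hg', hs, if_pos h]; nlinarith
      have hg'sum : ∑ i, g' i • r (i : Fin m) = 0 := by
        simp only [hg', mul_smul]
        rw [← Finset.smul_sum, hgsum, smul_zero]
      set c : Fin m → ℝ := fun i => if h : i ∈ T then g' ⟨i, h⟩ else 0 with hc
      have hc0 : ∀ i ∉ T, c i = 0 := fun i hi => by simp [hc, hi]
      have hci₀ : 0 < c (i₀ : Fin m) := by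
        have : c (i₀ : Fin m) = g' i₀ := by simp [hc, i₀.2]
        rw [this]; exact hg'i₀
      have hcsum : ∑ i, c i • r i = 0 := by
        rw [← Finset.sum_subset (Finset.subset_univ T) (fun i _ hi => by rw [hc0 i hi, zero_smul])]
        rw [← Finset.sum_coe_sort T (fun i => c i • r i)]
        rw [← hg'sum]
        exact Finset.sum_congr rfl fun i _ => by simp [hc, i.2]
      set Pos := Finset.univ.filter fun i => 0 < c i with hPos
      have hPosne : Pos.Nonempty := ⟨i₀, by simp [hPos, hci₀]⟩
      set t := Pos.inf' hPosne (fun i => lam i / c i) with htdef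
      obtain ⟨i₁, hi₁Pos, hi₁⟩ := Finset.exists_mem_eq_inf' hPosne (fun i => lam i / c i)
      have hci₁ : 0 < c i₁ := by simpa [hPos] using hi₁Pos
      have ht0 : 0 ≤ t := by
        rw [htdef, hi₁]
        exact div_nonneg (hlam i₁) hci₁.le
      set lam' : Fin m → ℝ := fun i => lam i - t * c i with hlam'def
      have hlam'0 : ∀ i, 0 ≤ lam' i := by
        intro i
        by_cases h : 0 < c i
        · have hiPos : i ∈ Pos := by simp [hPos, h]
          have ht_le : t ≤ lam i / c i := Finset.inf'_le _ hiPos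
          have := (le_div_iff₀ h).mp ht_le
          simp only [hlam'def]; linarith
        · have : t * c i ≤ 0 := mul_nonpos_of_nonneg_of_nonpos ht0 (not_lt.mp h)
          have := hlam i
          simp only [hlam'def]; linarith
      have hzero_to : ∀ i, lam i = 0 → lam' i = 0 := by
        intro i h
        have hiT : i ∉ T := by simp [hT, h]
        simp [hlam'def, h, hc0 i hiT]
      have hi₁T : i₁ ∈ T := by
        by_contra h
        rw [hc0 i₁ h] at hci₁; exact lt_irrefl 0 hci₁
      have hlam'i₁ : lam' i₁ = 0 := by
        simp only [hlam'def, htdef, hi₁]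
        field_simp
        ring
      have hsub : (Finset.univ.filter fun i => lam' i ≠ 0) ⊂ T := by
        constructor
        · intro i hi
          simp only [Finset.mem_filter, Finset.mem_univ, true_and] at hi
          simp only [hT, Finset.mem_filter, Finset.mem_univ, true_and]
          intro h; exact hi (hzero_to i h)
        · intro h
          have := h hi₁T
          simp only [Finset.mem_filter, Finset.mem_univ, true_and] at this
          exact this hlam'i₁
      have hcard' : (Finset.univ.filter fun i => lam' i ≠ 0).card ≤ N := by
        have := Finset.card_lt_card hsub
        omega
      have hsum' : ∑ i, lam' i • r i = ∑ i, lam i • r i := by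
        simp only [hlam'def, sub_smul, Finset.sum_sub_distrib, mul_smul]
        rw [← Finset.smul_sum, hcsum, smul_zero, sub_zero]
      obtain ⟨S, mu, h1, h2, h3, h4, h5⟩ := ih lam' hlam'0 hcard'
      refine ⟨S, mu, h1, h2, fun i hi => ?_, h4, h5.trans hsum'⟩
      intro h
      exact h3 i hi (hzero_to i h)

theorem hoffman {n m : ℕ} (r : Fin m → EuclideanSpace ℝ (Fin n)) :
    ∃ C : ℝ, 0 ≤ C ∧ ∀ (b' : Fin m → ℝ) (D : ℝ), 0 ≤ D →
      {v : EuclideanSpace ℝ (Fin n) | ∀ i, ⟪r i, v⟫ ≤ b' i}.Nonempty →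
      ∀ u : EuclideanSpace ℝ (Fin n), (∀ i, ⟪r i, u⟫ ≤ b' i + D) →
      ∃ p, (∀ i, ⟪r i, p⟫ ≤ b' i) ∧ ‖u - p‖ ≤ C * D := by
  classical
  set Cnn : NNReal := Finset.univ.sup (KS r) with hCnn
  refine ⟨(m : ℝ) * Cnn, by positivity, ?_⟩
  intro b' D hD hne u hu
  set S' : Set (EuclideanSpace ℝ (Fin n)) := {v | ∀ i, ⟪r i, v⟫ ≤ b' i} with hS'
  have hconv : Convex ℝ S' := by
    intro x hx y hy a c ha hc hac
    intro i
    have h1 := hx i; have h2 := hy i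
    have : ⟪r i, a • x + c • y⟫ = a * ⟪r i, x⟫ + c * ⟪r i, y⟫ := by
      rw [inner_add_right, real_inner_smul_right, real_inner_smul_right]
    rw [this]
    have h3 : a * ⟪r i, x⟫ ≤ a * b' i := mul_le_mul_of_nonneg_left h1 ha
    have h4 : c * ⟪r i, y⟫ ≤ c * b' i := mul_le_mul_of_nonneg_left h2 hc
    calc a * ⟪r i, x⟫ + c * ⟪r i, y⟫ ≤ a * b' i + c * b' i := by linarith
      _ = b' i := by rw [← add_mul, hac, one_mul]
  have hclosed : IsClosed S' := by
    have : S' = ⋂ i, {v : EuclideanSpace ℝ (Fin n) | ⟪r i, v⟫ ≤ b' i} := by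
      ext v; simp [hS', Set.mem_iInter]
    rw [this]
    exact isClosed_iInter fun i =>
      isClosed_le (Continuous.inner continuous_const continuous_id) continuous_const
  obtain ⟨p, hpS, hmin⟩ := exists_norm_eq_iInf_of_complete_convex hne hclosed.isComplete hconv u
  have hproj : ∀ w ∈ S', ⟪u - p, w - p⟫ ≤ 0 :=
    (norm_eq_iInf_iff_real_inner_le_zero hconv hpS).1 hmin
  -- Step B: the variational inequality extends to all directions feasible for active constraints
  have stepB : ∀ d : EuclideanSpace ℝ (Fin n), (∀ i, ⟪r i, p⟫ = b' i → ⟪r i, d⟫ ≤ 0) → ⟪u - p, d⟫ ≤ 0 := by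
    intro d hd
    set tf : Fin m → ℝ := fun i =>
      if 0 < ⟪r i, d⟫ then (b' i - ⟪r i, p⟫) / ⟪r i, d⟫ else 1 with htf_def
    have htf : ∀ i, 0 < tf i := by
      intro i
      simp only [htf_def]
      split_ifs with h
      · have hle : ⟪r i, p⟫ ≤ b' i := hpS i
        have hne' : ⟪r i, p⟫ ≠ b' i := fun heq => absurd (hd i heq) (not_le.mpr h)
        exact div_pos (by cases lt_or_eq_of_le hle with
          | inl h' => linarith
          | inr h' => exact absurd h' hne') h
      · exact one_pos
    set Tset : Finset ℝ := insert 1 (Finset.univ.image tf) with hTset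
    have h1T : (1 : ℝ) ∈ Tset := Finset.mem_insert_self _ _
    set t := Tset.min' ⟨1, h1T⟩ with htdef
    have ht0 : 0 < t := by
      have hall : ∀ x ∈ Tset, 0 < x := by
        intro x hx
        rw [hTset] at hx
        rcases Finset.mem_insert.mp hx with h | h
        · rw [h]; exact one_pos
        · obtain ⟨i, _, hi⟩ := Finset.mem_image.mp h
          rw [← hi]; exact htf i
      exact hall _ (Tset.min'_mem ⟨1, h1T⟩)
    have htle : ∀ i, t ≤ tf i := fun i =>
      Finset.min'_le _ _ (Finset.mem_insert_of_mem (Finset.mem_image_of_mem _ (Finset.mem_univ i)))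
    have hmem : p + t • d ∈ S' := by
      intro i
      rw [inner_add_right, real_inner_smul_right]
      by_cases h : 0 < ⟪r i, d⟫
      · have h2 : t * ⟪r i, d⟫ ≤ tf i * ⟪r i, d⟫ :=
          mul_le_mul_of_nonneg_right (htle i) h.le
        have h3 : tf i * ⟪r i, d⟫ = b' i - ⟪r i, p⟫ := by
          simp only [htf_def, if_pos h]
          exact div_mul_cancel₀ _ (ne_of_gt h)
        linarith
      · have h2 : t * ⟪r i, d⟫ ≤ 0 :=
          mul_nonpos_of_nonneg_of_nonpos ht0.le (not_lt.mp h)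
        have := hpS i
        linarith
    have hkey := hproj _ hmem
    rw [add_sub_cancel_left, real_inner_smul_right] at hkey
    nlinarith
  -- the cone generated by active rows
  set Kc : ConvexCone ℝ (EuclideanSpace ℝ (Fin n)) :=
    { carrier := {x | ∃ μ : Fin m → ℝ, (∀ i, 0 ≤ μ i) ∧
        (∀ i, ⟪r i, p⟫ ≠ b' i → μ i = 0) ∧ x = ∑ i, μ i • r i}
      smul_mem' := by
        rintro c hc x ⟨μ, hμ0, hμs, rfl⟩
        refine ⟨c • μ, fun i => mul_nonneg hc.le (hμ0 i),
          fun i hi => by simp [hμs i hi], ?_⟩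
        rw [Finset.smul_sum]
        exact Finset.sum_congr rfl fun i _ => by simp [smul_smul]
      add_mem' := by
        rintro x ⟨μ, hμ0, hμs, rfl⟩ y ⟨ν, hν0, hνs, rfl⟩
        refine ⟨μ + ν, fun i => add_nonneg (hμ0 i) (hν0 i),
          fun i hi => by simp [hμs i hi, hνs i hi], ?_⟩
        rw [← Finset.sum_add_distrib]
        exact Finset.sum_congr rfl fun i _ => by simp [add_smul] } with hKc
  have hsum_ext : ∀ (S : Finset (Fin m)) (mu : Fin m → ℝ), (∀ i ∉ S, mu i = 0) →
      ∑ i : S, mu (i : Fin m) • r i = ∑ i, mu i • r i := by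
    intro S mu h0
    rw [Finset.sum_coe_sort S (fun i => mu i • r i)]
    exact Finset.sum_subset (Finset.subset_univ S) (fun i _ hi => by rw [h0 i hi, zero_smul])
  have hKeq : (Kc : Set (EuclideanSpace ℝ (Fin n))) = ⋃ S ∈ {S : Finset (Fin m) | (∀ i ∈ S, ⟪r i, p⟫ = b' i) ∧
      LinearIndependent ℝ (fun i : S => r i)}, (combo (fun i : S => r i)) '' (Set.Ici 0) := by
    ext x
    simp only [Set.mem_iUnion, Set.mem_setOf_eq, Set.mem_image, Set.mem_Ici]
    constructor
    · rintro ⟨μ, hμ0, hμs, rfl⟩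
      obtain ⟨S, mu, h1, h2, h3, h4, h5⟩ := carath r μ hμ0
      refine ⟨S, ⟨fun i hi => ?_, h4⟩, fun i => mu i, fun i => h1 i, ?_⟩
      · by_contra hne'
        exact h3 i hi (hμs i hne')
      · rw [combo_apply, hsum_ext S mu h2, h5]
    · rintro ⟨S, ⟨hSact, _⟩, ν, hν0, rfl⟩
      refine ⟨fun i => if h : i ∈ S then ν ⟨i, h⟩ else 0, fun i => ?_, fun i hi => ?_, ?_⟩
      · by_cases h : i ∈ S
        · simpa [h] using hν0 ⟨i, h⟩
        · simp [h]
      · have : i ∉ S := fun h => hi (hSact i h)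
        simp [this]
      · rw [combo_apply, ← hsum_ext S _ (fun i hi => by simp [hi])]
        exact (Finset.sum_congr rfl fun i _ => by simp [i.2]).symm
  have hKclosed : IsClosed (Kc : Set (EuclideanSpace ℝ (Fin n))) := by
    rw [hKeq]
    exact Set.Finite.isClosed_biUnion (Set.toFinite _) fun S hS => coneS_closed r S hS.2
  have hKne : (Kc : Set (EuclideanSpace ℝ (Fin n))).Nonempty := ⟨0, 0, fun _ => le_rfl, fun _ _ => rfl, by simp⟩
  have hmemK : u - p ∈ Kc := by
    by_contra hnot
    obtain ⟨y, hy1, hy2⟩ :=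
      (by
        obtain ⟨y, hy1, hy2⟩ := ProperCone.hyperplane_separation'
          (⟨Kc.toPointedCone (ConvexCone.Pointed.of_nonempty_of_isClosed hKne hKclosed), hKclosed⟩ :
            ProperCone ℝ (EuclideanSpace ℝ (Fin n))) (x₀ := u - p) hnot
        exact ⟨y, hy1, by rwa [real_inner_comm]⟩ :
        ∃ y, (∀ x ∈ Kc, 0 ≤ ⟪x, y⟫) ∧ ⟪y, u - p⟫ < 0)
    have hstep : ⟪u - p, -y⟫ ≤ 0 := by
      refine stepB (-y) fun i hact => ?_
      have hri : r i ∈ Kc := by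
        refine ⟨fun k => if k = i then 1 else 0, fun k => by positivity,
          fun k hk => ?_, ?_⟩
        · by_cases h : k = i
          · exact absurd (h ▸ hact) hk
          · simp [h]
        · simp [ite_smul]
      have := hy1 _ hri
      rw [inner_neg_right]
      linarith
    rw [inner_neg_right] at hstep
    rw [real_inner_comm] at hy2
    linarith
  have hmemK2 : u - p ∈ (Kc : Set (EuclideanSpace ℝ (Fin n))) := hmemK
  rw [hKeq] at hmemK2
  simp only [Set.mem_iUnion, Set.mem_setOf_eq, Set.mem_image, Set.mem_Ici] at hmemK2
  obtain ⟨S, ⟨hSact, hSind⟩, ν, hν0, hνx⟩ := hmemK2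
  refine ⟨p, hpS, ?_⟩
  have hKS := KS_spec r S hSind
  have hν_norm : ‖ν‖ ≤ (KS r S : ℝ) * ‖u - p‖ := by
    have h := hKS.le_mul_dist ν 0
    rw [dist_zero_right, map_zero, dist_zero_right, hνx] at h
    exact h
  have hinner_each : ∀ i : S, ⟪r (i : Fin m), u - p⟫ ≤ D := by
    intro i
    rw [inner_sub_right]
    have h1 := hu (i : Fin m)
    have h2 : ⟪r (i : Fin m), p⟫ = b' (i : Fin m) := hSact _ i.2
    linarith
  have hcard : (S.card : ℝ) ≤ (m : ℝ) := by
    exact_mod_cast Finset.card_le_univ S |>.trans (by simp)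
  have hν0' : ∀ i : S, 0 ≤ ν i := fun i => hν0 i
  have hνle : ∀ i : S, ν i ≤ ‖ν‖ := fun i =>
    (le_abs_self _).trans (norm_le_pi_norm ν i)
  have hsum_le : ∑ i : S, ν i ≤ (m : ℝ) * ‖ν‖ := by
    calc ∑ i : S, ν i ≤ ∑ _i : S, ‖ν‖ := Finset.sum_le_sum fun i _ => hνle i
    _ = (S.card : ℝ) * ‖ν‖ := by simp [Finset.card_univ, mul_comm]
    _ ≤ (m : ℝ) * ‖ν‖ := mul_le_mul_of_nonneg_right hcard (norm_nonneg _)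
  have hsq : ‖u - p‖ * ‖u - p‖ = ⟪u - p, u - p⟫ :=
    (real_inner_self_eq_norm_mul_norm _).symm
  have hinner_sum : ⟪u - p, u - p⟫ = ∑ i : S, ν i * ⟪r (i : Fin m), u - p⟫ := by
    have h1 : ⟪u - p, u - p⟫ = ⟪(combo fun i : S => r i) ν, u - p⟫ := by rw [hνx]
    rw [h1, combo_apply, sum_inner]
    exact Finset.sum_congr rfl fun i _ => real_inner_smul_left _ _ _
  have hkey : ⟪u - p, u - p⟫ ≤ ((m : ℝ) * ‖ν‖) * D := by
    rw [hinner_sum]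
    calc ∑ i : S, ν i * ⟪r (i : Fin m), u - p⟫
        ≤ ∑ i : S, ν i * D :=
          Finset.sum_le_sum fun i _ => mul_le_mul_of_nonneg_left (hinner_each i) (hν0' i)
      _ = (∑ i : S, ν i) * D := by rw [← Finset.sum_mul]
      _ ≤ ((m : ℝ) * ‖ν‖) * D := mul_le_mul_of_nonneg_right hsum_le hD
  have hKSle : (KS r S : ℝ) ≤ (Cnn : ℝ) := by
    exact_mod_cast Finset.le_sup (f := KS r) (Finset.mem_univ S)
  rcases eq_or_lt_of_le (norm_nonneg (u - p)) with h0 | h0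
  · rw [← h0]; positivity
  · have hchain : ‖u - p‖ * ‖u - p‖ ≤ ((m : ℝ) * Cnn * D) * ‖u - p‖ := by
      rw [hsq]
      calc ⟪u - p, u - p⟫ ≤ ((m : ℝ) * ‖ν‖) * D := hkey
        _ ≤ ((m : ℝ) * ((KS r S : ℝ) * ‖u - p‖)) * D := by
            have := mul_le_mul_of_nonneg_left hν_norm (by positivity : (0:ℝ) ≤ (m:ℝ))
            exact mul_le_mul_of_nonneg_right this hD
        _ ≤ ((m : ℝ) * Cnn * D) * ‖u - p‖ := by
            have h1 : (0:ℝ) ≤ ‖u - p‖ := norm_nonneg _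
            nlinarith [mul_le_mul_of_nonneg_left hKSle
              (mul_nonneg (mul_nonneg (Nat.cast_nonneg (α := ℝ) m) hD) h1)]
    have := le_of_mul_le_mul_right hchain h0
    linarith [this]

lemma dist_pi_le_euclidean {n : ℕ} (x y : EuclideanSpace ℝ (Fin n)) :
    dist (WithLp.equiv 2 (Fin n → ℝ) x) (WithLp.equiv 2 (Fin n → ℝ) y) ≤ dist x y := by
  rw [dist_pi_le_iff dist_nonneg]
  intro j
  rw [EuclideanSpace.dist_eq]
  have h1 : dist (WithLp.equiv 2 (Fin n → ℝ) x j) (WithLp.equiv 2 (Fin n → ℝ) y j)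
      = Real.sqrt (dist (x j) (y j) ^ 2) := by
    rw [Real.sqrt_sq dist_nonneg]; rfl
  rw [h1]
  apply Real.sqrt_le_sqrt
  exact Finset.single_le_sum (f := fun i => dist (x i) (y i) ^ 2)
    (fun i _ => sq_nonneg _) (Finset.mem_univ j)

/-- for a polyhedron `P = {u : Au ≤ b}` and its `ε`-erosions
`P^ε = {u : Au ≤ b − εa}` with `a_i = min_j |A_{ij}|`, there is a constant `C ≥ 0`
depending only on `A` such that `d_∞(P, P^ε) ≤ C ε` whenever `P^ε ≠ ∅`.
(The metric on `Fin n → ℝ` is the sup-metric, so `Metric.hausdorffDist` is the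
`ℓ^∞` Hausdorff distance.) -/
theorem stmt18 (m n : ℕ) (hn : 0 < n) (A : Matrix (Fin m) (Fin n) ℝ) :
    ∃ C : ℝ, 0 ≤ C ∧
      ∀ b : Fin m → ℝ,
        {u : Fin n → ℝ | A.mulVec u ≤ b}.Nonempty →
        ∀ ε : ℝ, 0 ≤ ε →
          {u : Fin n → ℝ | A.mulVec u ≤ fun i => b i - ε * (⨅ j, |A i j|)}.Nonempty →
          Metric.hausdorffDist
              {u : Fin n → ℝ | A.mulVec u ≤ b}
              {u : Fin n → ℝ | A.mulVec u ≤ fun i => b i - ε * (⨅ j, |A i j|)} ≤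
            C * ε := by
  classical
  set r : Fin m → EuclideanSpace ℝ (Fin n) :=
    fun i => (WithLp.equiv 2 (Fin n → ℝ)).symm (A i) with hr
  obtain ⟨C3, hC3, hC⟩ := hoffman r
  have ha0 : ∀ i, (0:ℝ) ≤ ⨅ j, |A i j| := fun i => Real.iInf_nonneg fun j => abs_nonneg (A i j)
  set M : ℝ := ⨆ i, ⨅ j, |A i j| with hM
  have hM0 : 0 ≤ M := Real.iSup_nonneg ha0
  have haM : ∀ i, (⨅ j, |A i j|) ≤ M := fun i =>
    le_ciSup (f := fun i => ⨅ j, |A i j|)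
      (Set.Finite.bddAbove (Set.finite_range fun i => ⨅ j, |A i j|)) i
  have hinner : ∀ (i) (v : EuclideanSpace ℝ (Fin n)),
      ⟪r i, v⟫ = A.mulVec (WithLp.equiv 2 (Fin n → ℝ) v) i := by
    intro i v
    simp [hr, PiLp.inner_apply, RCLike.inner_apply, Matrix.mulVec, dotProduct,
      WithLp.equiv, Equiv.refl_apply]
    exact Finset.sum_congr rfl fun x _ => mul_comm _ _
  refine ⟨C3 * M, by positivity, ?_⟩
  intro b hP ε hε hPe
  apply Metric.hausdorffDist_le_of_mem_dist (by positivity)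
  · intro u huP
    have hu' : ∀ i, ⟪r i, (WithLp.equiv 2 (Fin n → ℝ)).symm u⟫
        ≤ (b i - ε * ⨅ j, |A i j|) + ε * M := by
      intro i
      rw [hinner, Equiv.apply_symm_apply]
      have h1 : A.mulVec u i ≤ b i := huP i
      have h2 : ε * (⨅ j, |A i j|) ≤ ε * M := mul_le_mul_of_nonneg_left (haM i) hε
      linarith
    obtain ⟨v0, hv0⟩ := hPe
    have hne : {v : EuclideanSpace ℝ (Fin n) |
        ∀ i, ⟪r i, v⟫ ≤ b i - ε * ⨅ j, |A i j|}.Nonempty := by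
      refine ⟨(WithLp.equiv 2 (Fin n → ℝ)).symm v0, fun i => ?_⟩
      rw [hinner, Equiv.apply_symm_apply]
      exact hv0 i
    obtain ⟨p, hp1, hp2⟩ := hC (fun i => b i - ε * ⨅ j, |A i j|) (ε * M) (by positivity) hne
      ((WithLp.equiv 2 (Fin n → ℝ)).symm u) hu'
    refine ⟨WithLp.equiv 2 (Fin n → ℝ) p, ?_, ?_⟩
    · intro i
      have := hp1 i
      rw [hinner] at this
      exact this
    · have hd : dist u (WithLp.equiv 2 (Fin n → ℝ) p)
          ≤ dist ((WithLp.equiv 2 (Fin n → ℝ)).symm u) p := by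
        have := dist_pi_le_euclidean ((WithLp.equiv 2 (Fin n → ℝ)).symm u) p
        rwa [Equiv.apply_symm_apply] at this
      have hd2 : dist ((WithLp.equiv 2 (Fin n → ℝ)).symm u) p
          = ‖(WithLp.equiv 2 (Fin n → ℝ)).symm u - p‖ := dist_eq_norm _ _
      calc dist u (WithLp.equiv 2 (Fin n → ℝ) p)
          ≤ ‖(WithLp.equiv 2 (Fin n → ℝ)).symm u - p‖ := hd2 ▸ hd
        _ ≤ C3 * (ε * M) := hp2
        _ = C3 * M * ε := by ring
  · intro v hv
    refine ⟨v, fun i => ?_, by rw [dist_self]; positivity⟩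
    have h1 : A.mulVec v i ≤ b i - ε * ⨅ j, |A i j| := hv i
    have h2 : 0 ≤ ε * ⨅ j, |A i j| := mul_nonneg hε (ha0 i)
    linarith
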